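/- arXiv:1908.03131 — 3 statements merged into one kernel-verified Lean document; each statement's English description precedes it below -/
import Mathlib

section
/- Let k be an algebraically closed field, let V₁, V₂, U be finite-dimensional k-vector spaces with dim V₁ = dim V₂, and let B : V₁ × V₂ → U be a bilinear map with no zero-divisors (i.e. B(v₁,v₂) ≠ 0 whenever v₁ ≠ 0 and v₂ ≠ 0). Then there exists a linear form σ : U → k such that the bilinear form σ ∘ B : V₁ × V₂ → k is a perfect pairing (nondegenerate). -/
open Polynomial Matrix in
lemma aux_det {k : Type*} [Field k] [Infinite k] {r : ℕ}
    (f g : (Fin r ⊕ Fin 1) → (Fin r ⊕ Fin 1) → k)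
    (hA : (Matrix.of fun i j => f (Sum.inl i) (Sum.inl j)).det ≠ 0)
    (hrow : ∀ j, f (Sum.inr 0) j = 0)
    (hcol : ∀ i, f i (Sum.inr 0) = 0)
    (hcorner : g (Sum.inr 0) (Sum.inr 0) = 1) :
    ∃ c : k, (Matrix.of fun i j => f i j + c * g i j).det ≠ 0 := by
  classical
  set Qm : Matrix (Fin r ⊕ Fin 1) (Fin r ⊕ Fin 1) k[X] :=
    Matrix.of (fun i j =>
      if i = Sum.inr 0 then C (g i j) else C (f i j) + X * C (g i j)) with hQm
  have hQ0 : Qm.map (evalRingHom 0) =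
      Matrix.fromBlocks (Matrix.of fun i j => f (Sum.inl i) (Sum.inl j)) 0
        (Matrix.of fun (i : Fin 1) (j : Fin r) => g (Sum.inr 0) (Sum.inl j))
        (Matrix.of fun (_ _ : Fin 1) => (1 : k)) := by
    ext i j
    rcases i with i | i <;> rcases j with j | j <;>
      simp [Qm, Matrix.map_apply, Matrix.fromBlocks, hcol, hcorner,
        Fin.fin_one_eq_zero]
  have hQdet0 : eval 0 Qm.det ≠ 0 := by
    have := RingHom.map_det (evalRingHom 0) Qm
    rw [RingHom.mapMatrix_apply] at this
    rw [show eval 0 Qm.det = (evalRingHom 0) Qm.det from rfl, this, hQ0,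
      Matrix.det_fromBlocks_zero₁₂]
    simpa using hA
  have hQdet : Qm.det ≠ 0 := fun h => hQdet0 (by rw [h, eval_zero])
  set Pm : Matrix (Fin r ⊕ Fin 1) (Fin r ⊕ Fin 1) k[X] :=
    Matrix.of (fun i j => C (f i j) + X * C (g i j)) with hPm
  have hPQ : Pm = Qm.updateRow (Sum.inr 0)
      ((X : k[X]) • ((fun j => C (g (Sum.inr 0) j)) : (Fin r ⊕ Fin 1) → k[X])) := by
    ext i j
    by_cases hi : i = Sum.inr 0
    · subst hi
      simp [Pm, Qm, Matrix.updateRow_self, hrow]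
    · simp [Pm, Qm, Matrix.updateRow_ne hi, hi]
  have hrowQ : (fun j => C (g (Sum.inr 0) j)) = Qm (Sum.inr 0) := by
    funext j; simp [Qm]
  have hPdet : Pm.det = X * Qm.det := by
    rw [hPQ, Matrix.det_updateRow_smul, hrowQ, Matrix.updateRow_eq_self]
  have hPne : Pm.det ≠ 0 := by
    rw [hPdet]
    exact mul_ne_zero X_ne_zero hQdet
  obtain ⟨c, hc⟩ := Pm.det.exists_eval_ne_zero_of_natDegree_lt_card hPne
    (lt_of_lt_of_le (Cardinal.nat_lt_aleph0 _) (Cardinal.infinite_iff.mp ‹Infinite k›))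
  refine ⟨c, ?_⟩
  have hmap : Pm.map (evalRingHom c) = Matrix.of fun i j => f i j + c * g i j := by
    ext i j; simp [Pm, Matrix.map_apply]; ring
  have := RingHom.map_det (evalRingHom c) Pm
  rw [RingHom.mapMatrix_apply, hmap] at this
  rw [show (Matrix.of fun i j => f i j + c * g i j).det = (evalRingHom c) Pm.det
    from this ▸ rfl]
  exact hc

/-- Let `k` be an algebraically closed field, `V₁, V₂, U`
finite-dimensional `k`-vector spaces with `dim V₁ = dim V₂`, and
`B : V₁ × V₂ → U` a bilinear map with no zero-divisors. Then there exists a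
linear form `σ : U → k` such that `σ ∘ B` is a perfect pairing, i.e. the two
induced maps `V₁ → V₂*` and `V₂ → V₁*` are bijective. -/
theorem stmt0 (k V₁ V₂ U : Type*) [Field k] [IsAlgClosed k]
    [AddCommGroup V₁] [Module k V₁] [FiniteDimensional k V₁]
    [AddCommGroup V₂] [Module k V₂] [FiniteDimensional k V₂]
    [AddCommGroup U] [Module k U] [FiniteDimensional k U]
    (hdim : Module.finrank k V₁ = Module.finrank k V₂)
    (B : V₁ →ₗ[k] V₂ →ₗ[k] U)
    (hB : ∀ v₁ v₂, v₁ ≠ 0 → v₂ ≠ 0 → B v₁ v₂ ≠ 0) :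
    ∃ σ : U →ₗ[k] k,
      Function.Bijective ((B.compr₂ σ) : V₁ →ₗ[k] (V₂ →ₗ[k] k)) ∧
      Function.Bijective ((B.compr₂ σ).flip : V₂ →ₗ[k] (V₁ →ₗ[k] k)) := by
  classical
  set n := Module.finrank k V₁ with hn
  set P : ℕ → Prop := fun r => ∃ (σ : U →ₗ[k] k) (p : Fin r → V₁) (q : Fin r → V₂),
    (Matrix.of fun i j => σ (B (p i) (q j))).det ≠ 0 with hP
  have hP0 : P 0 := ⟨0, Fin.elim0, Fin.elim0, by simp [Matrix.det_fin_zero]⟩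
  have hbound : ∀ m, P m → m ≤ n := by
    rintro m ⟨σ, p, q, hdet⟩
    have hli : LinearIndependent k p := by
      rw [Fintype.linearIndependent_iff]
      intro c hc
      have hvm : Matrix.vecMul c (Matrix.of fun i j => σ (B (p i) (q j))) = 0 := by
        funext j
        have := congrArg (fun v => σ (B v (q j))) hc
        simp only [map_zero, LinearMap.zero_apply] at this
        simp only [Matrix.vecMul, dotProduct, Matrix.of_apply, Pi.zero_apply]
        rw [← this]
        simp [map_sum, LinearMap.map_smul, smul_eq_mul]
      have h0 := Matrix.eq_zero_of_vecMul_eq_zero hdet hvm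
      exact fun i => congrFun h0 i
    simpa using hli.fintype_card_le_finrank
  set r := Nat.findGreatest P n with hr
  obtain ⟨σ, p, q, hdet⟩ : P r := Nat.findGreatest_spec (Nat.zero_le n) hP0
  have hfr1 : Module.finrank k V₁ = Module.finrank k (V₂ →ₗ[k] k) := by
    exact hdim.trans (Subspace.dual_finrank_eq (K := k) (V := V₂)).symm
  have hfr2 : Module.finrank k V₂ = Module.finrank k (V₁ →ₗ[k] k) := by
    exact hdim.symm.trans (Subspace.dual_finrank_eq (K := k) (V := V₁)).symm
  by_cases h1 : Function.Injective (B.compr₂ σ)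
  · have hsurj : Function.Surjective (B.compr₂ σ) :=
      (LinearMap.injective_iff_surjective_of_finrank_eq_finrank hfr1).mp h1
    have hinj2 : Function.Injective ((B.compr₂ σ).flip) := by
      rw [← LinearMap.ker_eq_bot, Submodule.eq_bot_iff]
      intro v₂ hv₂
      rw [LinearMap.mem_ker] at hv₂
      rw [← Module.forall_dual_apply_eq_zero_iff (R := k)]
      intro φ
      obtain ⟨v₁, hv₁⟩ := hsurj φ
      rw [← hv₁]
      exact LinearMap.congr_fun hv₂ v₁
    exact ⟨σ, ⟨h1, hsurj⟩, hinj2,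
      (LinearMap.injective_iff_surjective_of_finrank_eq_finrank hfr2).mp hinj2⟩
  by_cases h2 : Function.Injective ((B.compr₂ σ).flip)
  · have hsurj2 : Function.Surjective ((B.compr₂ σ).flip) :=
      (LinearMap.injective_iff_surjective_of_finrank_eq_finrank hfr2).mp h2
    have hinj1 : Function.Injective (B.compr₂ σ) := by
      rw [← LinearMap.ker_eq_bot, Submodule.eq_bot_iff]
      intro v₁ hv₁
      rw [LinearMap.mem_ker] at hv₁
      rw [← Module.forall_dual_apply_eq_zero_iff (R := k)]
      intro ψ
      obtain ⟨v₂, hv₂⟩ := hsurj2 ψ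
      rw [← hv₂]
      exact LinearMap.congr_fun hv₁ v₂
    exact ⟨σ, ⟨hinj1,
      (LinearMap.injective_iff_surjective_of_finrank_eq_finrank hfr1).mp hinj1⟩,
      h2, hsurj2⟩
  · exfalso
    obtain ⟨a, haker, ha0⟩ : ∃ a ∈ LinearMap.ker (B.compr₂ σ), a ≠ 0 := by
      rw [← Submodule.ne_bot_iff, Ne, LinearMap.ker_eq_bot]
      exact h1
    obtain ⟨b, hbker, hb0⟩ : ∃ b ∈ LinearMap.ker ((B.compr₂ σ).flip), b ≠ 0 := by
      rw [← Submodule.ne_bot_iff, Ne, LinearMap.ker_eq_bot]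
      exact h2
    rw [LinearMap.mem_ker] at haker hbker
    have hab : B a b ≠ 0 := hB a b ha0 hb0
    obtain ⟨τ₀, hτ₀⟩ : ∃ τ₀ : U →ₗ[k] k, τ₀ (B a b) ≠ 0 := by
      by_contra h
      push_neg at h
      exact hab ((Module.forall_dual_apply_eq_zero_iff (R := k) (B a b)).mp h)
    set τ : U →ₗ[k] k := (τ₀ (B a b))⁻¹ • τ₀ with hτdef
    have hτ : τ (B a b) = 1 := by
      simp [τ, inv_mul_cancel₀ hτ₀]
    set x' : Fin r ⊕ Fin 1 → V₁ := Sum.elim p (fun _ => a) with hx'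
    set y' : Fin r ⊕ Fin 1 → V₂ := Sum.elim q (fun _ => b) with hy'
    have hrowz : ∀ j, σ (B (x' (Sum.inr 0)) (y' j)) = 0 := by
      intro j
      have := LinearMap.congr_fun haker (y' j)
      simpa [x'] using this
    have hcolz : ∀ i, σ (B (x' i) (y' (Sum.inr 0))) = 0 := by
      intro i
      have := LinearMap.congr_fun hbker (x' i)
      simpa [y'] using this
    obtain ⟨c, hc⟩ := aux_det (fun i j => σ (B (x' i) (y' j)))
      (fun i j => τ (B (x' i) (y' j))) hdet hrowz hcolz (by simpa [x', y'] using hτ)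
    have hPsucc : P (r + 1) := by
      refine ⟨σ + c • τ, fun i => x' (finSumFinEquiv.symm i),
        fun i => y' (finSumFinEquiv.symm i), ?_⟩
      have he : (Matrix.of fun (i j : Fin (r + 1)) =>
          (σ + c • τ) (B (x' (finSumFinEquiv.symm i)) (y' (finSumFinEquiv.symm j)))) =
          (Matrix.of fun i j => (σ + c • τ) (B (x' i) (y' j))).submatrix
            finSumFinEquiv.symm finSumFinEquiv.symm := rfl
      rw [he, Matrix.det_submatrix_equiv_self]
      have he2 : (Matrix.of fun i j => (σ + c • τ) (B (x' i) (y' j))) =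
          Matrix.of fun i j => σ (B (x' i) (y' j)) + c * τ (B (x' i) (y' j)) := by
        ext i j
        simp [LinearMap.add_apply, LinearMap.smul_apply, smul_eq_mul]
      rw [he2]
      exact hc
    exact Nat.findGreatest_is_greatest (lt_add_one r) (hbound _ hPsucc) hPsucc
end

section
/- Let V, V' be finite-dimensional vector spaces over a field k of the same dimension. The map Isom(V,V')/k* → Isom(End(V), End(V')), sending the class of g to the algebra isomorphism f ↦ g ∘ f ∘ g⁻¹, is a bijection. -/
/-- In a vector space over a field, any nonzero vector admits a dual functional
sending it to `1`. -/
lemma exists_dual_eq_one (k : Type*) {V : Type*} [Field k] [AddCommGroup V] [Module k V]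
    {v : V} (hv : v ≠ 0) : ∃ φ : V →ₗ[k] k, φ v = 1 := by
  have h : ¬ ∀ φ : Module.Dual k V, φ v = 0 := fun h =>
    hv ((Module.forall_dual_apply_eq_zero_iff k v).mp h)
  push_neg at h
  obtain ⟨φ, hφ⟩ := h
  exact ⟨(φ v)⁻¹ • φ, by simp [inv_mul_cancel₀ hφ]⟩

/-- Skolem–Noether. For finite-dimensional `k`-vector spaces
`V`, `V'` of the same dimension, the map
`Isom(V,V')/kˣ → Isom(End(V), End(V'))`, `[g] ↦ (f ↦ g ∘ f ∘ g⁻¹)`,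
is a bijection: every `k`-algebra isomorphism `End(V) ≅ End(V')` is conjugation
by some linear isomorphism `g : V ≅ V'` (surjectivity), and two such `g` induce
the same algebra isomorphism iff they differ by a scalar in `kˣ`
(injectivity). -/
theorem stmt4 (k V V' : Type*) [Field k]
    [AddCommGroup V] [Module k V] [FiniteDimensional k V]
    [AddCommGroup V'] [Module k V'] [FiniteDimensional k V']
    (hdim : Module.finrank k V = Module.finrank k V') :
    (∀ Φ : (Module.End k V) ≃ₐ[k] (Module.End k V'),
      ∃ g : V ≃ₗ[k] V', ∀ (f : Module.End k V) (v : V),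
        Φ f (g v) = g (f v)) ∧
    (∀ g₁ g₂ : V ≃ₗ[k] V',
      (∀ (f : Module.End k V) (v : V'), g₁ (f (g₁.symm v)) = g₂ (f (g₂.symm v))) →
      ∃ c : kˣ, ∀ v : V, g₁ v = (c : k) • g₂ v) := by
  constructor
  · -- Surjectivity
    intro Φ
    by_cases hV : Subsingleton V
    · have h0 : Module.finrank k V' = 0 := by
        rw [← hdim]; exact Module.finrank_zero_iff.mpr hV
      have hV' : Subsingleton V' := Module.finrank_zero_iff.mp h0
      exact ⟨LinearEquiv.ofFinrankEq V V' hdim, fun f v => Subsingleton.elim _ _⟩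
    · have : Nontrivial V := not_subsingleton_iff_nontrivial.mp hV
      obtain ⟨v₀, hv₀⟩ := exists_ne (0 : V)
      obtain ⟨φ, hφ⟩ := exists_dual_eq_one k hv₀
      set e : Module.End k V := φ.smulRight v₀ with he
      have he2 : e * e = e := by
        apply LinearMap.ext; intro u
        simp [he, Module.End.mul_apply, hφ, smul_smul]
      have heapp : e v₀ = v₀ := by simp [he, hφ]
      have hene : e ≠ 0 := by
        intro h
        rw [h] at heapp
        exact hv₀ (by simpa using heapp.symm)
      have hΦe : Φ e ≠ 0 := by
        intro h
        exact hene (Φ.injective (by simpa using h))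
      have hexw : ∃ w : V', Φ e w ≠ 0 := by
        by_contra h
        push_neg at h
        exact hΦe (LinearMap.ext fun w => by simpa using h w)
      obtain ⟨w, hw⟩ := hexw
      set w₀ : V' := Φ e w with hw₀def
      have hw₀ : w₀ ≠ 0 := hw
      have hew₀ : Φ e w₀ = w₀ := by
        rw [hw₀def, ← Module.End.mul_apply, ← map_mul, he2]
      -- The candidate map
      set G : V →ₗ[k] V' :=
        (LinearMap.applyₗ w₀).comp (Φ.toLinearMap.comp (LinearMap.smulRightₗ φ)) with hGdef
      have hG : ∀ v : V, G v = Φ (φ.smulRight v) w₀ := fun v => rfl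
      -- intertwining
      have hkey : ∀ (f : Module.End k V) (v : V),
          f * φ.smulRight v = φ.smulRight (f v) := by
        intro f v
        apply LinearMap.ext; intro u
        simp [Module.End.mul_apply, map_smul]
      have hint : ∀ (f : Module.End k V) (v : V), Φ f (G v) = G (f v) := by
        intro f v
        rw [hG, hG, ← Module.End.mul_apply, ← map_mul, hkey]
      -- injectivity of G
      have hinj : Function.Injective G := by
        rw [← LinearMap.ker_eq_bot, LinearMap.ker_eq_bot']
        intro v hv
        by_contra hvne
        obtain ⟨ψ, hψ⟩ := exists_dual_eq_one k hvne
        have hs : (ψ.smulRight v₀) * φ.smulRight v = e := by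
          apply LinearMap.ext; intro u
          simp [he, Module.End.mul_apply, hψ, smul_smul]
        have : w₀ = 0 := by
          calc w₀ = Φ e w₀ := hew₀.symm
          _ = Φ (ψ.smulRight v₀) (Φ (φ.smulRight v) w₀) := by
              rw [← hs, map_mul, Module.End.mul_apply]
          _ = Φ (ψ.smulRight v₀) (G v) := by rw [hG]
          _ = 0 := by rw [hv]; simp
        exact hw₀ this
      have hsurj : Function.Surjective G :=
        (LinearMap.injective_iff_surjective_of_finrank_eq_finrank hdim).mp hinj
      refine ⟨LinearEquiv.ofBijective G ⟨hinj, hsurj⟩, fun f v => ?_⟩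
      exact hint f v
  · -- Injectivity
    intro g₁ g₂ hgg
    by_cases hV : Subsingleton V
    · exact ⟨1, fun v => by rw [Subsingleton.elim v 0]; simp⟩
    · have : Nontrivial V := not_subsingleton_iff_nontrivial.mp hV
      obtain ⟨v₀, hv₀⟩ := exists_ne (0 : V)
      obtain ⟨φ, hφ⟩ := exists_dual_eq_one k hv₀
      have hcomm : ∀ (f : Module.End k V) (v : V),
          g₂.symm (g₁ (f v)) = f (g₂.symm (g₁ v)) := by
        intro f v
        have h := hgg f (g₁ v)
        rw [g₁.symm_apply_apply] at h
        rw [h, g₂.symm_apply_apply]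
      set c : k := φ (g₂.symm (g₁ v₀)) with hcdef
      have hc : ∀ v : V, g₂.symm (g₁ v) = c • v := by
        intro v
        have h1 : (φ.smulRight v) v₀ = v := by simp [hφ]
        have h := hcomm (φ.smulRight v) v₀
        rw [h1] at h
        rw [h]
        simp [hcdef]
      have hc0 : c ≠ 0 := by
        intro h
        have h2 := hc v₀
        rw [h, zero_smul] at h2
        apply hv₀
        have h3 : g₁ v₀ = 0 := by
          have := congrArg g₂ h2
          simpa using this
        simpa using g₁.injective (by simp [h3])
      refine ⟨Units.mk0 c hc0, fun v => ?_⟩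
      have h := congrArg g₂ (hc v)
      simpa [map_smul] using h
end

section
/- Let E be a field with a nontrivial involution ι with fixed field F = E^ι, and let A be a central simple E-algebra. If A has an involution of the second kind extending ι (an ι-semilinear ring anti-automorphism of order 2), then for any central simple E-algebra B Brauer-equivalent to A, B also admits an involution of the second kind extending ι. -/
open scoped TensorProduct

/-- An involution of the second kind on an `E`-algebra `A`, extending a given
automorphism `ι` of `E`: an additive, anti-multiplicative, `ι`-semilinear map
`τ : A → A` with `τ² = id`. -/
def IsSecondKindInvolution {F E A : Type*} [Field F] [Field E] [Algebra F E]
    [Ring A] [Algebra E A] (ι : E ≃ₐ[F] E) (τ : A → A) : Prop :=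
  (∀ x y : A, τ (x + y) = τ x + τ y) ∧
  (∀ x y : A, τ (x * y) = τ y * τ x) ∧
  (∀ (c : E) (x : A), τ (c • x) = ι c • τ x) ∧
  (∀ x : A, τ (τ x) = x) ∧ τ 1 = 1

section Aux

variable {F E : Type*} [Field F] [Field E] [Algebra F E] (ι : E ≃ₐ[F] E)

namespace SKIAux

lemma map_zero' {A : Type*} [Ring A] [Algebra E A] {τ : A → A}
    (h : IsSecondKindInvolution ι τ) : τ 0 = 0 := by
  have h2 : τ 0 + τ 0 = τ 0 := by
    rw [← h.1 0 0, add_zero]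
  exact add_eq_left.mp h2

lemma transport {C C' : Type*} [Ring C] [Algebra E C] [Ring C'] [Algebra E C']
    (φ : C ≃ₐ[E] C') {τ : C → C} (h : IsSecondKindInvolution ι τ) :
    IsSecondKindInvolution ι (fun x => φ (τ (φ.symm x))) := by
  obtain ⟨hadd, hmul, hsmul, hinv, hone⟩ := h
  refine ⟨?_, ?_, ?_, ?_, ?_⟩
  · intro x y
    show φ (τ (φ.symm (x + y))) = φ (τ (φ.symm x)) + φ (τ (φ.symm y))
    rw [map_add, hadd, map_add]
  · intro x y
    show φ (τ (φ.symm (x * y))) = φ (τ (φ.symm y)) * φ (τ (φ.symm x))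
    rw [map_mul, hmul, map_mul]
  · intro c x
    show φ (τ (φ.symm (c • x))) = ι c • φ (τ (φ.symm x))
    rw [map_smul, hsmul, map_smul]
  · intro x
    show φ (τ (φ.symm (φ (τ (φ.symm x))))) = x
    rw [φ.symm_apply_apply, hinv, φ.apply_symm_apply]
  · show φ (τ (φ.symm 1)) = 1
    rw [map_one, hone, map_one]

lemma matrixInv {A : Type*} [Ring A] [Algebra E A] {τ : A → A}
    (h : IsSecondKindInvolution ι τ) (n : ℕ) :
    IsSecondKindInvolution ι
      (fun M : Matrix (Fin n) (Fin n) A => Matrix.of fun i j => τ (M j i)) := by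
  obtain ⟨hadd, hmul, hsmul, hinv, hone⟩ := h
  have h0 : τ 0 = 0 := map_zero' ι ⟨hadd, hmul, hsmul, hinv, hone⟩
  let τ' : A →+ A := AddMonoidHom.mk' τ (fun x y => hadd x y)
  refine ⟨?_, ?_, ?_, ?_, ?_⟩
  · intro M N; ext i j
    simp [hadd]
  · intro M N; ext i j
    simp only [Matrix.mul_apply, Matrix.of_apply]
    have hs : τ (∑ k, M j k * N k i) = ∑ k, τ (M j k * N k i) :=
      map_sum τ' (fun k => M j k * N k i) Finset.univ
    rw [hs]
    exact Finset.sum_congr rfl (fun k _ => hmul (M j k) (N k i))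
  · intro c M; ext i j
    simp [hsmul]
  · intro M; ext i j
    simp [hinv]
  · ext i j
    by_cases hij : i = j
    · subst hij; simp [Matrix.one_apply, hone]
    · simp [Matrix.one_apply, hij, Ne.symm hij, h0]

/-- In a simple ring, if `p * c * q = 0` for all `c` and `q ≠ 0`, then `p = 0`. -/
lemma simple_mul {C : Type*} [Ring C] [Algebra E C] [IsSimpleRing C] {p q : C}
    (hq : q ≠ 0) (h : ∀ c : C, p * c * q = 0) : p = 0 := by
  classical
  set S : Set C := ((Submodule.span E {x : C | ∃ a b : C, x = a * q * b} : Submodule E C) : Set C) with hS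
  have hgen : ∀ a b : C, a * q * b ∈ S := fun a b =>
    Submodule.subset_span ⟨a, b, rfl⟩
  have hmull : ∀ {x y : C}, y ∈ S → x * y ∈ S := by
    intro x y hy
    refine Submodule.span_induction (p := fun y _ => x * y ∈ S) ?_ ?_ ?_ ?_ hy
    · rintro z ⟨a, b, rfl⟩
      rw [show x * (a * q * b) = (x * a) * q * b by simp only [mul_assoc]]
      exact hgen _ _
    · simp only [mul_zero]; exact Submodule.zero_mem _
    · intro u v _ _ hu hv; rw [mul_add]; exact Submodule.add_mem _ hu hv
    · intro c u _ hu; rw [mul_smul_comm]; exact Submodule.smul_mem _ _ hu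
  have hmulr : ∀ {x y : C}, x ∈ S → x * y ∈ S := by
    intro x y hx
    refine Submodule.span_induction (p := fun x _ => x * y ∈ S) ?_ ?_ ?_ ?_ hx
    · rintro z ⟨a, b, rfl⟩
      rw [show (a * q * b) * y = a * q * (b * y) by simp only [mul_assoc]]
      exact hgen _ _
    · simp only [zero_mul]; exact Submodule.zero_mem _
    · intro u v _ _ hu hv; rw [add_mul]; exact Submodule.add_mem _ hu hv
    · intro c u _ hu; rw [smul_mul_assoc]; exact Submodule.smul_mem _ _ hu
  let I : TwoSidedIdeal C := TwoSidedIdeal.mk' S (Submodule.zero_mem _)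
    (fun hx hy => Submodule.add_mem _ hx hy) (fun hx => Submodule.neg_mem _ hx)
    hmull hmulr
  have hqI : q ∈ I := by
    rw [TwoSidedIdeal.mem_mk']
    simpa using hgen 1 1
  have hIbot : I ≠ ⊥ := by
    intro hb
    rw [hb] at hqI
    exact hq (by simpa using hqI)
  have hItop : I = ⊤ := (IsSimpleRing.simple.eq_bot_or_eq_top I).resolve_left hIbot
  have h1 : (1 : C) ∈ S := by
    have : (1 : C) ∈ I := by rw [hItop]; trivial
    rwa [TwoSidedIdeal.mem_mk'] at this
  have key : ∀ x ∈ (Submodule.span E {x : C | ∃ a b : C, x = a * q * b} : Submodule E C),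
      p * x = 0 := by
    intro x hx
    refine Submodule.span_induction (p := fun x _ => p * x = 0) ?_ ?_ ?_ ?_ hx
    · rintro z ⟨a, b, rfl⟩
      rw [show p * (a * q * b) = (p * a * q) * b by simp only [mul_assoc], h a, zero_mul]
    · simp
    · intro u v _ _ hu hv; rw [mul_add, hu, hv, add_zero]
    · intro c u _ hu; rw [mul_smul_comm, hu, smul_zero]
  have := key 1 h1
  rwa [mul_one] at this

/-- In a finite-dimensional simple algebra, every nonzero idempotent dominates a
"primitive" idempotent (one whose principal left ideal is minimal, stated elementwise). -/
lemma exists_primitive {C : Type*} [Ring C] [Algebra E C] [IsSimpleRing C]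
    [FiniteDimensional E C] (e : C) (he : e * e = e) (he0 : e ≠ 0) :
    ∃ ε : C, ε * ε = ε ∧ ε ≠ 0 ∧ ε * e = ε ∧ e * ε = ε ∧
      (∀ y : C, y ≠ 0 → y * ε = y → ∃ c : C, c * y = ε) := by
  classical
  -- rank of a C-submodule, as an E-module
  let rk : Submodule C C → ℕ := fun N => Module.finrank E (N.restrictScalars E)
  have hstrict : ∀ {N N' : Submodule C C}, N < N' → rk N < rk N' := by
    intro N N' hlt
    apply Submodule.finrank_lt_finrank_of_lt
    refine lt_of_le_of_ne ?_ ?_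
    · exact fun x hx => hlt.le hx
    · intro hEq
      exact hlt.ne (Submodule.restrictScalars_injective E C C hEq)
  -- the set of ranks of nonzero C-submodules of Ce
  let P : Submodule C C → Prop := fun N => N ≠ ⊥ ∧ N ≤ Submodule.span C {e}
  have hPe : P (Submodule.span C {e}) := by
    constructor
    · rw [Ne, Submodule.span_singleton_eq_bot]; exact he0
    · exact le_rfl
  let ranks : Set ℕ := {k | ∃ N, P N ∧ rk N = k}
  have hranks : ranks.Nonempty := ⟨_, _, hPe, rfl⟩
  obtain ⟨L, hPL, hLrk⟩ : ∃ N, P N ∧ rk N = sInf ranks := Nat.sInf_mem hranks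
  -- minimality of L
  have hmin : ∀ N : Submodule C C, N ≠ ⊥ → N ≤ L → N = L := by
    intro N hN hNL
    by_contra hne
    have hlt : N < L := lt_of_le_of_ne hNL hne
    have h1 : rk N < sInf ranks := hLrk ▸ hstrict hlt
    have h2 : sInf ranks ≤ rk N := Nat.sInf_le ⟨N, ⟨hN, le_trans hNL hPL.2⟩, rfl⟩
    omega
  obtain ⟨y, hyL, hy0⟩ := Submodule.ne_bot_iff _ |>.mp hPL.1
  -- find b ∈ L with y * b ≠ 0
  have hyc : ∃ c : C, y * c * y ≠ 0 := by
    by_contra hc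
    push_neg at hc
    exact hy0 (simple_mul (E := E) hy0 hc)
  obtain ⟨c, hc⟩ := hyc
  set b : C := c * y with hb
  have hbL : b ∈ L := L.smul_mem c hyL
  have hyb : y * b ≠ 0 := by rwa [hb, ← mul_assoc]
  have hb0 : b ≠ 0 := fun hb0 => hyb (by rw [hb0, mul_zero])
  -- right multiplication by b, as a C-linear map
  let φ : C →ₗ[C] C := LinearMap.toSpanSingleton C C b
  have hφ : ∀ x : C, φ x = x * b := fun x => rfl
  -- L·b = L
  have hLb : Submodule.map φ L = L := by
    apply hmin
    · rw [Submodule.ne_bot_iff]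
      exact ⟨y * b, ⟨y, hyL, rfl⟩, hyb⟩
    · rintro _ ⟨a, haL, rfl⟩
      exact L.smul_mem a hbL
  -- get ε ∈ L with ε * b = b
  have hbLb : b ∈ Submodule.map φ L := hLb.symm ▸ hbL
  obtain ⟨ε, hεL, hεb⟩ := hbLb
  rw [hφ] at hεb
  -- the annihilator of b in L is trivial
  have hann : L ⊓ LinearMap.ker φ = ⊥ := by
    by_contra hab
    have := hmin _ hab inf_le_left
    have hyk : y ∈ LinearMap.ker φ := by
      rw [← this] at hyL
      exact hyL.2
    rw [LinearMap.mem_ker, hφ] at hyk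
    exact hyb hyk
  -- ε is idempotent
  have hεε : ε * ε = ε := by
    have hmem : ε * ε - ε ∈ L ⊓ LinearMap.ker φ := by
      refine Submodule.mem_inf.mpr ⟨?_, ?_⟩
      · exact L.sub_mem (L.smul_mem ε hεL) hεL
      · rw [LinearMap.mem_ker, hφ, sub_mul, mul_assoc, hεb, hεb, sub_self]
    rw [hann] at hmem
    have hz : ε * ε - ε = 0 := by simpa using hmem
    exact sub_eq_zero.mp hz
  have hε0 : ε ≠ 0 := by
    intro h0
    rw [h0, zero_mul] at hεb
    exact hb0 hεb.symm
  -- ε ∈ Ce, so ε * e = ε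
  have hεe : ε * e = ε := by
    have : ε ∈ Submodule.span C {e} := hPL.2 hεL
    obtain ⟨d, hd⟩ := Submodule.mem_span_singleton.mp this
    rw [← hd, smul_eq_mul, mul_assoc, he]
  -- pass to ε' = e * ε
  refine ⟨e * ε, ?_, ?_, ?_, ?_, ?_⟩
  · rw [mul_assoc, ← mul_assoc ε e ε, hεe, hεε]
  · intro h0
    apply hε0
    calc ε = ε * ε := hεε.symm
    _ = (ε * e) * ε := by rw [hεe]
    _ = ε * (e * ε) := by rw [mul_assoc]
    _ = 0 := by rw [h0, mul_zero]
  · rw [mul_assoc, hεe]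
  · rw [← mul_assoc, he]
  · -- primitivity
    intro z hz0 hzε
    have hzε2 : z * ε = z := by
      calc z * ε = (z * (e * ε)) * ε := by rw [hzε]
      _ = z * (e * (ε * ε)) := by simp only [mul_assoc]
      _ = z * (e * ε) := by rw [hεε]
      _ = z := hzε
    have hzL : z ∈ L := by
      have : z = z • ε := by rw [smul_eq_mul, hzε2]
      rw [this]
      exact L.smul_mem z hεL
    have hCz : Submodule.span C {z} = L := by
      apply hmin
      · rw [Ne, Submodule.span_singleton_eq_bot]; exact hz0
      · rw [Submodule.span_le, Set.singleton_subset_iff]; exact hzL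
    have hεL' : e * ε ∈ Submodule.span C {z} := by
      rw [hCz]
      exact L.smul_mem e hεL
    obtain ⟨d, hd⟩ := Submodule.mem_span_singleton.mp hεL'
    exact ⟨d, by rw [← smul_eq_mul, hd]⟩

/-- For a primitive idempotent `ε` in a simple algebra with a second-kind involution,
there is a "symmetric rank-one pair" `(p, q)` implementing an equivalence
between `ε` and `Θ ε`. -/
lemma primitive_pair {C : Type*} [Ring C] [Algebra E C] [IsSimpleRing C]
    (hι' : ∃ c : E, ι c ≠ c) {Θ : C → C} (hΘ : IsSecondKindInvolution ι Θ)
    (ε : C) (hεε : ε * ε = ε) (hε0 : ε ≠ 0)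
    (hprim : ∀ y : C, y ≠ 0 → y * ε = y → ∃ c : C, c * y = ε) :
    ∃ p q : C, ε * p = p ∧ q * ε = q ∧ p * q = ε ∧ q * p = Θ ε ∧ Θ p = p ∧ Θ q = q := by
  obtain ⟨hadd, hmul, hsmul, hinv, hone⟩ := hΘ
  have h0 : Θ 0 = 0 := map_zero' ι ⟨hadd, hmul, hsmul, hinv, hone⟩
  have hinj : ∀ x : C, Θ x = 0 → x = 0 := fun x hx => by rw [← hinv x, hx, h0]
  have hθε : Θ ε * Θ ε = Θ ε := by rw [← hmul, hεε]
  have hθε0 : Θ ε ≠ 0 := fun hx => hε0 (hinj ε hx)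
  -- Step 1: anisotropy
  have aniso : ∃ x : C, x * ε = x ∧ Θ x * x ≠ 0 := by
    by_contra hcon
    push_neg at hcon
    have pol : ∀ x y : C, x * ε = x → y * ε = y → Θ x * y + Θ y * x = 0 := by
      intro x y hx hy
      have hxy : (x + y) * ε = x + y := by rw [add_mul, hx, hy]
      have key : Θ x * y + Θ y * x
          = Θ (x + y) * (x + y) - Θ x * x - Θ y * y := by
        rw [hadd]; noncomm_ring
      rw [key, hcon (x + y) hxy, hcon x hx, hcon y hy]
      simp
    obtain ⟨c₀, hc₀⟩ := hι'
    have vanish : ∀ x y : C, x * ε = x → y * ε = y → Θ x * y = 0 := by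
      intro x y hx hy
      have h1 := pol x y hx hy
      have hx' : (c₀ • x) * ε = c₀ • x := by rw [smul_mul_assoc, hx]
      have h2 := pol (c₀ • x) y hx' hy
      rw [hsmul c₀ x, smul_mul_assoc, mul_smul_comm] at h2
      have h4 : Θ y * x = -(Θ x * y) := eq_neg_of_add_eq_zero_right h1
      rw [h4, smul_neg, ← sub_eq_add_neg] at h2
      have h3 : (ι c₀ - c₀) • (Θ x * y) = 0 := by
        rw [sub_smul]; exact h2
      rcases smul_eq_zero.mp h3 with hsz | hv
      · exact absurd (sub_eq_zero.mp hsz) hc₀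
      · exact hv
    have hall : ∀ d : C, Θ ε * d * ε = 0 := by
      intro d
      have hx : (Θ d * ε) * ε = Θ d * ε := by rw [mul_assoc, hεε]
      have := vanish (Θ d * ε) ε hx hεε
      rw [hmul, hinv] at this
      rwa [mul_assoc] at this ⊢
    exact hθε0 (simple_mul (E := E) hε0 hall)
  obtain ⟨x₀, hx₀ε, hw0⟩ := aniso
  set w : C := Θ x₀ * x₀ with hwdef
  have hwε : w * ε = w := by rw [hwdef, mul_assoc, hx₀ε]
  have hθx₀ : Θ ε * Θ x₀ = Θ x₀ := by rw [← hmul, hx₀ε]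
  have hεw : Θ ε * w = w := by rw [hwdef, ← mul_assoc, hθx₀]
  have hθw : Θ w = w := by rw [hwdef, hmul, hinv]
  obtain ⟨c, hcw⟩ := hprim w hw0 hwε
  set w' : C := ε * c * Θ ε with hw'def
  have hεw' : ε * w' = w' := by rw [hw'def, ← mul_assoc, ← mul_assoc, hεε]
  have hw'θε : w' * Θ ε = w' := by rw [hw'def, mul_assoc (ε * c), hθε]
  have hw'w : w' * w = ε := by
    rw [hw'def, mul_assoc, hεw, mul_assoc, hcw, hεε]
  -- auxiliary primitivity lemmas
  have div : ∀ d : C, d ≠ 0 → d * ε = d → ε * d = d →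
      ∃ d' : C, ε * d' = d' ∧ d' * ε = d' ∧ d' * d = ε ∧ d * d' = ε := by
    intro d hd0 hdε hεd
    obtain ⟨c₁, hc₁⟩ := hprim d hd0 hdε
    refine ⟨ε * c₁ * ε, ?_, ?_, ?_, ?_⟩
    · rw [← mul_assoc, ← mul_assoc, hεε]
    · rw [mul_assoc (ε * c₁), hεε]
    · rw [mul_assoc, mul_assoc, hεd, ← mul_assoc, mul_assoc, hc₁, hεε]
    · -- d * d' = ε
      set q₂ : C := d * (ε * c₁ * ε) with hq₂def
      have hq₂ε : q₂ * ε = q₂ := by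
        rw [hq₂def]
        calc d * (ε * c₁ * ε) * ε = d * (ε * c₁ * (ε * ε)) := by simp only [mul_assoc]
        _ = d * (ε * c₁ * ε) := by rw [hεε]
      have hd'd : (ε * c₁ * ε) * d = ε := by
        rw [mul_assoc, mul_assoc, hεd, ← mul_assoc, mul_assoc, hc₁, hεε]
      have hq₂0 : q₂ ≠ 0 := by
        intro hz
        apply hd0
        calc d = d * ε := hdε.symm
        _ = d * ((ε * c₁ * ε) * d) := by rw [hd'd]
        _ = q₂ * d := by rw [hq₂def]; simp only [mul_assoc]
        _ = 0 := by rw [hz, zero_mul]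
      obtain ⟨c₂, hc₂⟩ := hprim q₂ hq₂0 hq₂ε
      have hεq₂ : ε * q₂ = q₂ := by
        rw [hq₂def, ← mul_assoc ε d _, hεd]
      have hεq₂' : ε * q₂ = ε := by
        have hq₂q₂ : q₂ * q₂ = q₂ := by
          rw [hq₂def]
          calc d * (ε * c₁ * ε) * (d * (ε * c₁ * ε))
              = d * ((ε * c₁ * ε) * d * (ε * c₁ * ε)) := by simp only [mul_assoc]
          _ = d * (ε * (ε * c₁ * ε)) := by rw [hd'd]
          _ = d * ((ε * ε) * c₁ * ε) := by simp only [mul_assoc]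
          _ = d * (ε * c₁ * ε) := by rw [hεε]
        calc ε * q₂ = (c₂ * q₂) * q₂ := by rw [hc₂]
        _ = c₂ * (q₂ * q₂) := by rw [mul_assoc]
        _ = c₂ * q₂ := by rw [hq₂q₂]
        _ = ε := hc₂
      calc d * (ε * c₁ * ε) = q₂ := hq₂def.symm
      _ = ε * q₂ := hεq₂.symm
      _ = ε := hεq₂'
  have rprim : ∀ z : C, z ≠ 0 → ε * z = z → ∃ c' : C, z * c' = ε := by
    intro z hz0 hεz
    have hc₃ : ∃ c₃ : C, z * c₃ * ε ≠ 0 := by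
      by_contra hcc
      push_neg at hcc
      exact hz0 (simple_mul (E := E) hε0 hcc)
    obtain ⟨c₃, hc₃⟩ := hc₃
    set d : C := z * c₃ * ε with hddef
    have hdε : d * ε = d := by rw [hddef, mul_assoc (z * c₃), hεε]
    have hεd : ε * d = d := by rw [hddef, ← mul_assoc, ← mul_assoc, hεz]
    obtain ⟨d', _, _, _, hdd'⟩ := div d hc₃ hdε hεd
    refine ⟨c₃ * (ε * d'), ?_⟩
    calc z * (c₃ * (ε * d')) = (z * c₃ * ε) * d' := by simp only [mul_assoc]
    _ = d * d' := by rw [← hddef]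
    _ = ε := hdd'
  have θprim : ∀ y : C, y ≠ 0 → y * Θ ε = y → ∃ c' : C, c' * y = Θ ε := by
    intro y hy0 hyθε
    have hz0 : Θ y ≠ 0 := fun hz => hy0 (hinj y hz)
    have hεz : ε * Θ y = Θ y := by
      conv_rhs => rw [← hyθε]
      rw [hmul, hinv]
    obtain ⟨c', hc'⟩ := rprim (Θ y) hz0 hεz
    refine ⟨Θ c', ?_⟩
    have := congrArg Θ hc'
    rwa [hmul, hinv] at this
  -- Step 2: w * w' = Θ ε
  have hww' : w * w' = Θ ε := by
    set q : C := w * w' with hqdef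
    have hq1 : Θ ε * q = q := by rw [hqdef, ← mul_assoc, hεw]
    have hq2 : q * Θ ε = q := by rw [hqdef, mul_assoc, hw'θε]
    have hqq : q * q = q := by
      rw [hqdef]
      calc w * w' * (w * w') = w * (w' * w) * w' := by simp only [mul_assoc]
      _ = w * ε * w' := by rw [hw'w]
      _ = w * (ε * w') := by rw [mul_assoc]
      _ = w * w' := by rw [hεw']
    have hq0 : q ≠ 0 := by
      intro hz
      apply hε0
      calc ε = ε * ε := hεε.symm
      _ = (w' * w) * (w' * w) := by rw [hw'w]
      _ = w' * (w * w') * w := by simp only [mul_assoc]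
      _ = 0 := by rw [← hqdef, hz, mul_zero, zero_mul]
    obtain ⟨c₄, hc₄⟩ := θprim q hq0 hq2
    have : Θ ε * q = Θ ε := by
      calc Θ ε * q = (c₄ * q) * q := by rw [hc₄]
      _ = c₄ * (q * q) := by rw [mul_assoc]
      _ = c₄ * q := by rw [hqq]
      _ = Θ ε := hc₄
    exact hq1.symm.trans this
  -- Step 3: Θ w' = w'
  have hθw' : Θ w' = w' := by
    have h5 : w * Θ w' = Θ ε := by
      have := congrArg Θ hw'w
      rwa [hmul, hθw] at this
    have h6 : w * (Θ w' - w') = 0 := by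
      rw [mul_sub, h5, hww', sub_self]
    have hεθw' : ε * Θ w' = Θ w' := by
      conv_rhs => rw [← hw'θε, hmul, hinv]
    have : Θ w' - w' = 0 := by
      calc Θ w' - w' = ε * Θ w' - ε * w' := by rw [hεθw', hεw']
      _ = ε * (Θ w' - w') := by rw [mul_sub]
      _ = (w' * w) * (Θ w' - w') := by rw [hw'w]
      _ = w' * (w * (Θ w' - w')) := by rw [mul_assoc]
      _ = 0 := by rw [h6, mul_zero]
    exact sub_eq_zero.mp this
  exact ⟨w', w, hεw', hwε, hw'w, hww', hθw', hθw⟩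

/-- Main structural lemma: for every idempotent `e` in a finite-dimensional simple
algebra with a second-kind involution `Θ`, there is a pair `(p, q)` with
`Θ p = p`, `Θ q = q`, `p * q = e`, `q * p = Θ e`, `e * p = p`, `q * e = q`. -/
lemma main {C : Type*} [Ring C] [Algebra E C] [IsSimpleRing C] [FiniteDimensional E C]
    (hι' : ∃ c : E, ι c ≠ c) {Θ : C → C} (hΘ : IsSecondKindInvolution ι Θ) :
    ∀ e : C, e * e = e →
      ∃ p q : C, e * p = p ∧ q * e = q ∧ p * q = e ∧ q * p = Θ e ∧ Θ p = p ∧ Θ q = q := by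
  classical
  obtain ⟨hadd, hmul, hsmul, hinv, hone⟩ := hΘ
  have h0 : Θ 0 = 0 := map_zero' ι ⟨hadd, hmul, hsmul, hinv, hone⟩
  let rk : C → ℕ := fun x => Module.finrank E ((Submodule.span C {x}).restrictScalars E)
  have hstrict : ∀ {N N' : Submodule C C}, N < N' →
      Module.finrank E (N.restrictScalars E) < Module.finrank E (N'.restrictScalars E) := by
    intro N N' hlt
    apply Submodule.finrank_lt_finrank_of_lt
    refine lt_of_le_of_ne (fun x hx => hlt.le hx) ?_
    intro hEq
    exact hlt.ne (Submodule.restrictScalars_injective E C C hEq)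
  have hbase : ∀ e : C, e = 0 →
      ∃ p q : C, e * p = p ∧ q * e = q ∧ p * q = e ∧ q * p = Θ e ∧ Θ p = p ∧ Θ q = q := by
    intro e he0
    subst he0
    exact ⟨0, 0, by rw [mul_zero], by rw [zero_mul], by rw [mul_zero],
      by rw [mul_zero, h0], h0, h0⟩
  suffices H : ∀ k : ℕ, ∀ e : C, e * e = e → rk e ≤ k →
      ∃ p q : C, e * p = p ∧ q * e = q ∧ p * q = e ∧ q * p = Θ e ∧ Θ p = p ∧ Θ q = q by
    exact fun e he => H (rk e) e he le_rfl
  intro k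
  induction k with
  | zero =>
    intro e he hrk
    apply hbase
    have h1 : (Submodule.span C {e}).restrictScalars E = ⊥ := by
      have : Module.finrank E ((Submodule.span C {e}).restrictScalars E) = 0 :=
        Nat.le_zero.mp hrk
      exact Submodule.finrank_eq_zero.mp this
    have h2 : Submodule.span C {e} = ⊥ := by
      rwa [Submodule.restrictScalars_eq_bot_iff] at h1
    rwa [Submodule.span_singleton_eq_bot] at h2
  | succ k ih =>
    intro e he hrk
    by_cases he0 : e = 0
    · exact hbase e he0
    · obtain ⟨ε, hεε, hε0, hεe, heε, hprim⟩ := exists_primitive (E := E) e he he0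
      obtain ⟨p₁, q₁, hp₁, hq₁, hpq₁, hqp₁, hθp₁, hθq₁⟩ :=
        primitive_pair ι hι' ⟨hadd, hmul, hsmul, hinv, hone⟩ ε hεε hε0 hprim
      set g : C := e - ε with hgdef
      have hesplit : e = ε + g := by rw [hgdef]; abel
      have hεg : ε * g = 0 := by rw [hgdef, mul_sub, hεe, hεε, sub_self]
      have hgε : g * ε = 0 := by rw [hgdef, sub_mul, heε, hεε, sub_self]
      have hgg : g * g = g := by
        rw [hgdef, sub_mul, mul_sub, mul_sub, he, heε, hεe, hεε, sub_self, sub_zero]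
      have hge : g * e = g := by rw [hgdef, sub_mul, he, hεe]
      have heg : e * g = g := by rw [hgdef, mul_sub, he, heε]
      -- rank drop
      have hspan : Submodule.span C {g} < Submodule.span C {e} := by
        refine lt_of_le_of_ne ?_ ?_
        · rw [Submodule.span_le, Set.singleton_subset_iff]
          rw [show g = g • e by rw [smul_eq_mul, hge]]
          exact Submodule.smul_mem _ g (Submodule.mem_span_singleton_self e)
        · intro hEq
          have hε_in : ε ∈ Submodule.span C {g} := by
            rw [hEq]
            rw [show ε = ε • e by rw [smul_eq_mul, hεe]]
            exact Submodule.smul_mem _ ε (Submodule.mem_span_singleton_self e)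
          obtain ⟨c, hc⟩ := Submodule.mem_span_singleton.mp hε_in
          apply hε0
          calc ε = ε * ε := hεε.symm
          _ = (c • g) * ε := by rw [hc]
          _ = c • (g * ε) := by rw [smul_mul_assoc]
          _ = 0 := by rw [hgε, smul_zero]
      have hrkg : rk g ≤ k := by
        have h1 : rk g < rk e := hstrict hspan
        omega
      obtain ⟨p₂, q₂, hp₂, hq₂, hpq₂, hqp₂, hθp₂, hθq₂⟩ := ih g hgg hrkg
      -- derived absorption relations
      have hp₁θε : p₁ * Θ ε = p₁ := by
        calc p₁ * Θ ε = p₁ * (q₁ * p₁) := by rw [hqp₁]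
        _ = (p₁ * q₁) * p₁ := by rw [mul_assoc]
        _ = ε * p₁ := by rw [hpq₁]
        _ = p₁ := hp₁
      have hθεq₁ : Θ ε * q₁ = q₁ := by
        calc Θ ε * q₁ = (q₁ * p₁) * q₁ := by rw [hqp₁]
        _ = q₁ * (p₁ * q₁) := by rw [mul_assoc]
        _ = q₁ * ε := by rw [hpq₁]
        _ = q₁ := hq₁
      have hp₂θg : p₂ * Θ g = p₂ := by
        calc p₂ * Θ g = p₂ * (q₂ * p₂) := by rw [hqp₂]
        _ = (p₂ * q₂) * p₂ := by rw [mul_assoc]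
        _ = g * p₂ := by rw [hpq₂]
        _ = p₂ := hp₂
      have hθgq₂ : Θ g * q₂ = q₂ := by
        calc Θ g * q₂ = (q₂ * p₂) * q₂ := by rw [hqp₂]
        _ = q₂ * (p₂ * q₂) := by rw [mul_assoc]
        _ = q₂ * g := by rw [hpq₂]
        _ = q₂ := hq₂
      have hθεθg : Θ ε * Θ g = 0 := by rw [← hmul g ε, hgε, h0]
      have hθgθε : Θ g * Θ ε = 0 := by rw [← hmul ε g, hεg, h0]
      -- cross-term vanishing
      have hεp₂ : ε * p₂ = 0 := by rw [← hp₂, ← mul_assoc, hεg, zero_mul]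
      have hgp₁ : g * p₁ = 0 := by rw [← hp₁, ← mul_assoc, hgε, zero_mul]
      have hq₁g : q₁ * g = 0 := by rw [← hq₁, mul_assoc, hεg, mul_zero]
      have hq₂ε : q₂ * ε = 0 := by rw [← hq₂, mul_assoc, hgε, mul_zero]
      have hp₁q₂ : p₁ * q₂ = 0 := by
        rw [← hp₁θε, ← hθgq₂, mul_assoc, ← mul_assoc (Θ ε), hθεθg, zero_mul, mul_zero]
      have hp₂q₁ : p₂ * q₁ = 0 := by
        rw [← hp₂θg, ← hθεq₁, mul_assoc, ← mul_assoc (Θ g), hθgθε, zero_mul, mul_zero]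
      have hq₁p₂ : q₁ * p₂ = 0 := by
        rw [← hq₁, ← hp₂, mul_assoc, ← mul_assoc ε, hεg, zero_mul, mul_zero]
      have hq₂p₁ : q₂ * p₁ = 0 := by
        rw [← hq₂, ← hp₁, mul_assoc, ← mul_assoc g, hgε, zero_mul, mul_zero]
      refine ⟨p₁ + p₂, q₁ + q₂, ?_, ?_, ?_, ?_, ?_, ?_⟩
      · conv_lhs => rw [hesplit]
        rw [add_mul, mul_add, mul_add, hp₁, hεp₂, hgp₁, hp₂]
        abel
      · conv_lhs => rw [hesplit]
        rw [mul_add, add_mul, add_mul]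
        have h1 : q₁ * ε = q₁ := hq₁
        have h2 : q₂ * g = q₂ := hq₂
        rw [h1, h2, hq₁g, hq₂ε]
        abel
      · rw [add_mul, mul_add, mul_add, hpq₁, hpq₂, hp₁q₂, hp₂q₁, hesplit]
        abel
      · rw [add_mul, mul_add, mul_add, hqp₁, hqp₂, hq₁p₂, hq₂p₁]
        conv_rhs => rw [hesplit, hadd]
        abel
      · rw [hadd, hθp₁, hθp₂]
      · rw [hadd, hθq₁, hθq₂]

end SKIAux

end Aux

set_option maxHeartbeats 1600000 in
/-- Let `E/F` be a quadratic extension with nontrivial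
involution `ι` (fixed field `F`), and let `A`, `B` be central simple
`E`-algebras which are Brauer-equivalent (`A ⊗ Mₙ(E) ≅ B ⊗ Mₘ(E)`). If `A`
admits an involution of the second kind extending `ι`, then so does `B`. -/
theorem stmt5 (F E A B : Type*) [Field F] [Field E] [Algebra F E]
    (ι : E ≃ₐ[F] E) (hι : ι ≠ AlgEquiv.refl)
    (hfix : ∀ x : E, ι x = x → x ∈ (algebraMap F E).range)
    [Ring A] [Algebra E A] [Algebra.IsCentral E A] [IsSimpleRing A]
    [FiniteDimensional E A]
    [Ring B] [Algebra E B] [Algebra.IsCentral E B] [IsSimpleRing B]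
    [FiniteDimensional E B]
    (hBrauer : ∃ n m : ℕ, 0 < n ∧ 0 < m ∧
      Nonempty ((A ⊗[E] Matrix (Fin n) (Fin n) E) ≃ₐ[E]
                (B ⊗[E] Matrix (Fin m) (Fin m) E)))
    (hA : ∃ τ : A → A, IsSecondKindInvolution ι τ) :
    ∃ τ : B → B, IsSecondKindInvolution ι τ := by
  classical
  obtain ⟨n, m, hn, hm, ⟨iso⟩⟩ := hBrauer
  obtain ⟨τ, hτ⟩ := hA
  -- the scalar ι moves
  have hι' : ∃ c : E, ι c ≠ c := by
    by_contra hcon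
    push_neg at hcon
    exact hι (AlgEquiv.ext fun x => (hcon x).trans rfl)
  haveI : Nonempty (Fin m) := ⟨⟨0, hm⟩⟩
  set z : Fin m := ⟨0, hm⟩ with hz
  -- the matrix algebra over B, with its transported involution
  set CC := Matrix (Fin m) (Fin m) B with hCC
  let f : Matrix (Fin n) (Fin n) A ≃ₐ[E] CC :=
    (matrixEquivTensor (Fin n) E A).trans (iso.trans (matrixEquivTensor (Fin m) E B).symm)
  have hΘA : IsSecondKindInvolution ι
      (fun M : Matrix (Fin n) (Fin n) A => Matrix.of fun i j => τ (M j i)) :=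
    SKIAux.matrixInv ι hτ n
  set Θ : CC → CC :=
    fun X => f ((fun M : Matrix (Fin n) (Fin n) A => Matrix.of fun i j => τ (M j i))
      (f.symm X)) with hΘdef
  have hΘ : IsSecondKindInvolution ι Θ := SKIAux.transport ι f hΘA
  obtain ⟨hadd, hmul, hsmul, hinv, hone⟩ := hΘ
  have h0 : Θ 0 = 0 := SKIAux.map_zero' ι ⟨hadd, hmul, hsmul, hinv, hone⟩
  -- the corner idempotent
  let jB : B → CC := fun b => Matrix.single z z b
  set eM : CC := jB 1 with heM
  have jmul : ∀ a b : B, jB a * jB b = jB (a * b) := fun a b =>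
    Matrix.single_mul_single_same a z z z b
  have jadd : ∀ a b : B, jB (a + b) = jB a + jB b := fun a b =>
    Matrix.single_add z z a b
  have jsmul : ∀ (c : E) (b : B), jB (c • b) = c • jB b := fun c b =>
    (Matrix.smul_single c z z b).symm
  have japply : ∀ b : B, jB b z z = b := fun b => Matrix.single_apply_same z z b
  have jinj : ∀ a b : B, jB a = jB b → a = b := by
    intro a b hab
    have := congrFun (congrFun hab z) z
    rwa [japply, japply] at this
  have hee : eM * eM = eM := by rw [heM, jmul, one_mul]
  have he0 : eM ≠ 0 := by
    intro hbot
    have : (1 : B) = 0 := by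
      rw [← japply 1, ← heM, hbot]
      rfl
    exact one_ne_zero this
  have corner : ∀ X : CC, eM * X * eM = jB (X z z) := by
    intro X
    show Matrix.single z z 1 * X * Matrix.single z z 1
      = Matrix.single z z (X z z)
    ext i j
    by_cases hj : j = z
    · subst hj
      rw [Matrix.mul_single_apply_same (1 : B) z z i
        (Matrix.single z z 1 * X)]
      by_cases hi : i = z
      · subst hi
        rw [Matrix.single_mul_apply_same (1 : B) z z z X,
          one_mul, mul_one, Matrix.single_apply_same]
      · rw [Matrix.single_mul_apply_of_ne (1 : B) z z i z hi X, zero_mul]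
        exact (Matrix.single_apply_of_ne z z (X z z) i z (by tauto)).symm
    · rw [Matrix.mul_single_apply_of_ne (1 : B) z z i j hj
        (Matrix.single z z 1 * X)]
      exact (Matrix.single_apply_of_ne z z (X z z) i j (by tauto)).symm
  -- the main construction
  obtain ⟨p, q, hep, hqe, hpq, hqp, hθp, hθq⟩ :=
    SKIAux.main ι hι' ⟨hadd, hmul, hsmul, hinv, hone⟩ eM hee
  -- the involution on B
  set τB : B → B := fun b => (p * Θ (jB b) * q) z z with hτB
  have hje : ∀ b : B, jB b * eM = jB b := by
    intro b; rw [heM, jmul, mul_one]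
  have hej : ∀ b : B, eM * jB b = jB b := by
    intro b; rw [heM, jmul, one_mul]
  have key : ∀ b : B, jB (τB b) = p * Θ (jB b) * q := by
    intro b
    have h1 : eM * (p * Θ (jB b) * q) * eM = p * Θ (jB b) * q := by
      calc eM * (p * Θ (jB b) * q) * eM = (eM * p) * Θ (jB b) * (q * eM) := by
            simp only [mul_assoc]
      _ = p * Θ (jB b) * q := by rw [hep, hqe]
    have h2 := corner (p * Θ (jB b) * q)
    rw [h1] at h2
    exact h2.symm
  refine ⟨τB, ?_, ?_, ?_, ?_, ?_⟩
  · -- additivity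
    intro x y
    apply jinj
    rw [jadd, key, key, key, jadd, hadd, mul_add, add_mul]
  · -- anti-multiplicativity
    intro x y
    have habs : Θ eM * Θ (jB x) = Θ (jB x) := by rw [← hmul (jB x) eM, hje]
    have step : (p * Θ (jB y) * q) * (p * Θ (jB x) * q)
        = p * (Θ (jB y) * Θ (jB x)) * q := by
      calc (p * Θ (jB y) * q) * (p * Θ (jB x) * q)
          = p * Θ (jB y) * (q * p) * (Θ (jB x) * q) := by simp only [mul_assoc]
      _ = p * Θ (jB y) * Θ eM * (Θ (jB x) * q) := by rw [hqp]
      _ = p * Θ (jB y) * (Θ eM * Θ (jB x)) * q := by simp only [mul_assoc]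
      _ = p * Θ (jB y) * Θ (jB x) * q := by rw [habs]
      _ = p * (Θ (jB y) * Θ (jB x)) * q := by simp only [mul_assoc]
    apply jinj
    rw [← jmul (τB y) (τB x), key (x * y), key y, key x, step, ← hmul, jmul]
  · -- semilinearity
    intro c x
    apply jinj
    rw [jsmul, key, jsmul, hsmul, key]
    rw [mul_smul_comm, smul_mul_assoc]
  · -- involutivity
    intro x
    apply jinj
    rw [key, key]
    have hθpq : Θ (p * Θ (jB x) * q) = q * (jB x * p) := by
      rw [hmul, hmul, hinv, hθp, hθq]
    rw [hθpq]
    calc p * (q * (jB x * p)) * q = (p * q) * jB x * (p * q) := by simp only [mul_assoc]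
    _ = eM * jB x * eM := by rw [hpq]
    _ = jB ((jB x) z z) := corner _
    _ = jB x := by rw [japply]
  · -- unit
    apply jinj
    rw [key]
    calc p * Θ (jB 1) * q = p * Θ eM * q := by rw [heM]
    _ = p * (q * p) * q := by rw [← hqp]
    _ = (p * q) * (p * q) := by simp only [mul_assoc]
    _ = eM * eM := by rw [hpq]
    _ = jB 1 := by rw [hee, heM]
end
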